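/- arXiv:1907.13254 — 4 statements merged into one kernel-verified Lean document; each statement's English description precedes it below -/
import Mathlib

section
/- For n = 2, let σ = δ^{11}, t = −x_{21}x_{22} + x_{11}(x_{21}+x_{22}) − x_{11}² ∈ Λ, and let Γ̃ = ℂ[x_{11}, x_{21}+x_{22}, x_{21}x_{22}, x_{21}−x_{22}] ⊆ Λ. Then the generalized Weyl algebra relations hold in End_ℂ(L): for every d ∈ Γ̃, X_1⁺ ∘ m_d = m_{σ(d)} ∘ X_1⁺ and X_1⁻ ∘ m_d = m_{σ^{-1}(d)} ∘ X_1⁻; moreover X_1⁻ ∘ X_1⁺ = m_t and X_1⁺ ∘ X_1⁻ = m_{σ(t)}. -/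
open scoped BigOperators
open MvPolynomial

noncomputable section

/-- The polynomial ring `Λ = ℂ[x_{ki}]` (variables indexed by pairs `(k, i)`). -/
abbrev Lam : Type := MvPolynomial (ℕ × ℕ) ℂ

/-- `L`, the field of fractions of `Λ`. -/
abbrev L : Type := FractionRing Lam

/-- The variable `x_{ki}` as an element of `L`. -/
def x (k i : ℕ) : L := algebraMap Lam L (X (k, i))

/-- The algebra automorphism of `Λ` sending `x_v ↦ x_v - 1` and fixing the other variables. -/
def shiftEquiv (v : ℕ × ℕ) : Lam ≃ₐ[ℂ] Lam :=
  AlgEquiv.ofAlgHom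
    (aeval (fun w => if w = v then X w - 1 else X w))
    (aeval (fun w => if w = v then X w + 1 else X w))
    (by apply MvPolynomial.algHom_ext; intro w; by_cases h : w = v <;> simp [h])
    (by apply MvPolynomial.algHom_ext; intro w; by_cases h : w = v <;> simp [h])

/-- The automorphism `δ^{ki}` of `L`, determined by `δ^{ki}(x_{ℓj}) = x_{ℓj} - δ_{ℓk}δ_{ij}`. -/
def δ (k i : ℕ) : L ≃ₐ[ℂ] L := IsFractionRing.algEquivOfAlgEquiv (shiftEquiv (k, i))

/-- Multiplication by `a ∈ L` as a `ℂ`-linear endomorphism `m_a` of `L`. -/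
def mulOp (a : L) : Module.End ℂ L := LinearMap.mulLeft ℂ a

/-- A field automorphism of `L` as a `ℂ`-linear endomorphism of `L`. -/
def lin (e : L ≃ₐ[ℂ] L) : Module.End ℂ L := e.toLinearMap

/-- The rational function `a_{ki}^+`. -/
def aP (k i : ℕ) : L :=
  -((∏ j ∈ Finset.Icc 1 (k + 1), (x (k + 1) j - x k i)) /
    ∏ j ∈ (Finset.Icc 1 k).erase i, (x k j - x k i))

/-- The rational function `a_{ki}^-`. -/
def aM (k i : ℕ) : L :=
  (∏ j ∈ Finset.Icc 1 (k - 1), (x (k - 1) j - x k i)) /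
    ∏ j ∈ (Finset.Icc 1 k).erase i, (x k j - x k i)

/-- The operator `A_{ki}^+ = δ^{ki} ∘ m_{a_{ki}^+}`. -/
def Ap (k i : ℕ) : Module.End ℂ L := lin (δ k i) * mulOp (aP k i)

/-- The operator `A_{ki}^- = (δ^{ki})^{-1} ∘ m_{a_{ki}^-}`. -/
def Am (k i : ℕ) : Module.End ℂ L := lin (δ k i).symm * mulOp (aM k i)

/-- The operator `X_k^+ = ∑_{i=1}^k A_{ki}^+`. -/
def Xp (k : ℕ) : Module.End ℂ L := ∑ i ∈ Finset.Icc 1 k, Ap k i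

/-- The operator `X_k^- = ∑_{i=1}^k A_{ki}^-`. -/
def Xm (k : ℕ) : Module.End ℂ L := ∑ i ∈ Finset.Icc 1 k, Am k i

/-- The operator `X_{kk}`. -/
def Xd (k : ℕ) : Module.End ℂ L :=
  mulOp ((∑ j ∈ Finset.Icc 1 k, (x k j + (j : L) - 1)) -
    ∑ i ∈ Finset.Icc 1 (k - 1), (x (k - 1) i + (i : L) - 1))

/-- The Vandermonde polynomial `∏_{1 ≤ i < j ≤ k} (x_{ki} - x_{kj})`, as an element of `L`. -/
def vand (k : ℕ) : L :=
  ∏ p ∈ (Finset.Icc 1 k ×ˢ Finset.Icc 1 k).filter (fun p => p.1 < p.2),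
    (x k p.1 - x k p.2)

/-- The operator `𝒱_k = m_{∏_{i<j}(x_{ki} - x_{kj})}`. -/
def Vop (k : ℕ) : Module.End ℂ L := mulOp (vand k)

/-- The generating set of `U_n`: the `X_k^±` for `1 ≤ k ≤ n-1` and the `X_{kk}` for `1 ≤ k ≤ n`. -/
def Ugens (n : ℕ) : Set (Module.End ℂ L) :=
  {u | ∃ k, 1 ≤ k ∧ k + 1 ≤ n ∧ (u = Xp k ∨ u = Xm k)} ∪
    {u | ∃ k, 1 ≤ k ∧ k ≤ n ∧ u = Xd k}

/-- `U_n`, the Gelfand–Tsetlin realization of `U(gl_n)` inside `End_ℂ(L)`. -/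
def Ualg (n : ℕ) : Subalgebra ℂ (Module.End ℂ L) := Algebra.adjoin ℂ (Ugens n)

/-- `𝒜(gl_n)`, the subalgebra generated by `U_n` together with `𝒱_2, …, 𝒱_n`. -/
def Agl (n : ℕ) : Subalgebra ℂ (Module.End ℂ L) :=
  Algebra.adjoin ℂ (Ugens n ∪ {u | ∃ k, 2 ≤ k ∧ k ≤ n ∧ u = Vop k})

/-- `Γ̃ = ℂ[x_{11}, x_{21}+x_{22}, x_{21}x_{22}, x_{21}−x_{22}]` (inside `L`). -/
def GammaTilde2 : Subalgebra ℂ L :=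
  Algebra.adjoin ℂ ({x 1 1, x 2 1 + x 2 2, x 2 1 * x 2 2, x 2 1 - x 2 2} : Set L)


lemma aM11 : aM 1 1 = 1 := by
  simp [aM, Finset.Icc_self]

lemma aP11 : aP 1 1 = -(x 2 1 * x 2 2) + x 1 1 * (x 2 1 + x 2 2) - x 1 1 ^ 2 := by
  have h2 : Finset.Icc 1 2 = ({1, 2} : Finset ℕ) := by decide
  simp [aP, Finset.Icc_self, h2]
  ring

lemma mulOp_mul (a b : L) : mulOp a * mulOp b = mulOp (a * b) := by
  ext v; simp [mulOp, mul_assoc]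

lemma lin_mul_mulOp (e : L ≃ₐ[ℂ] L) (a : L) :
    lin e * mulOp a = mulOp (e a) * lin e := by
  ext v
  show e (a * v) = e a * e v
  exact map_mul e a v

lemma lin_symm_mul (e : L ≃ₐ[ℂ] L) : lin e.symm * lin e = 1 := by
  ext v
  exact e.symm_apply_apply v

lemma lin_mul_symm (e : L ≃ₐ[ℂ] L) : lin e * lin e.symm = 1 := by
  ext v
  exact e.apply_symm_apply v

lemma Xp1 : Xp 1 = lin (δ 1 1) * mulOp (aP 1 1) := by
  rw [Xp, Finset.Icc_self, Finset.sum_singleton, Ap]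

lemma Xm1 : Xm 1 = lin (δ 1 1).symm := by
  rw [Xm, Finset.Icc_self, Finset.sum_singleton, Am, aM11]
  ext v
  show (δ 1 1).symm ((1 : L) * v) = (δ 1 1).symm v
  rw [one_mul]

set_option synthInstance.maxHeartbeats 1000000 in
set_option maxHeartbeats 1000000 in
/-- `𝒜(gl_2)` satisfies the generalized Weyl algebra relations with
`σ = δ^{11}` and `t = −x_{21}x_{22} + x_{11}(x_{21}+x_{22}) − x_{11}²`. -/
theorem Agl2_GWA_relations :
    (∀ d ∈ GammaTilde2, Xp 1 * mulOp d = mulOp (δ 1 1 d) * Xp 1) ∧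
    (∀ d ∈ GammaTilde2, Xm 1 * mulOp d = mulOp ((δ 1 1).symm d) * Xm 1) ∧
    Xm 1 * Xp 1 = mulOp (-(x 2 1 * x 2 2) + x 1 1 * (x 2 1 + x 2 2) - x 1 1 ^ 2) ∧
    Xp 1 * Xm 1 = mulOp (δ 1 1 (-(x 2 1 * x 2 2) + x 1 1 * (x 2 1 + x 2 2) - x 1 1 ^ 2)) := by
  refine ⟨?_, ?_, ?_, ?_⟩
  · intro d _
    rw [Xp1, mul_assoc, mulOp_mul, lin_mul_mulOp, map_mul,
      mul_comm ((δ 1 1) (aP 1 1)), ← mulOp_mul, mul_assoc, ← lin_mul_mulOp]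
  · intro d _
    rw [Xm1, lin_mul_mulOp]
  · rw [Xm1, Xp1, ← mul_assoc, lin_symm_mul, one_mul, aP11]
  · rw [Xp1, Xm1, lin_mul_mulOp, mul_assoc, lin_mul_symm, mul_one, aP11]
end
end

section
/- For n = 3, the following commutator identities hold in End_ℂ(L), where [a,b] = a∘b − b∘a: [𝒱_2, X_2⁺] = A_{21}⁺ − A_{22}⁺ and [𝒱_2, X_2⁻] = −(A_{21}⁻ − A_{22}⁻). Consequently the operators A_{21}^± = ½(X_2^± ± [𝒱_2, X_2^±]) and A_{22}^± = ½(X_2^± ∓ [𝒱_2, X_2^±]) lie in 𝒜(gl_3). -/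
open scoped BigOperators
open MvPolynomial

set_option synthInstance.maxHeartbeats 1000000
set_option maxHeartbeats 4000000

noncomputable section

lemma delta_x_ne (k i l j : ℕ) (h : (l,j) ≠ (k,i)) : δ k i (x l j) = x l j := by
  rw [δ, x, IsFractionRing.algEquivOfAlgEquiv_algebraMap]
  simp [shiftEquiv, h]

lemma delta_x_eq (k i : ℕ) : δ k i (x k i) = x k i - 1 := by
  rw [δ, x, IsFractionRing.algEquivOfAlgEquiv_algebraMap]
  have : (shiftEquiv (k,i)) (X (k,i)) = X (k,i) - 1 := by simp [shiftEquiv]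
  rw [this, map_sub, map_one]

lemma key_comm (e : L ≃ₐ[ℂ] L) (v a : L) :
    mulOp v * (lin e * mulOp a) - (lin e * mulOp a) * mulOp v
      = lin e * mulOp ((e.symm v - v) * a) := by
  apply LinearMap.ext; intro f
  simp only [LinearMap.sub_apply, Module.End.mul_apply, mulOp, lin,
    LinearMap.mulLeft_apply, AlgEquiv.toLinearMap_apply, map_mul, map_sub,
    AlgEquiv.apply_symm_apply, sub_mul]
  ring

lemma key_comm' (e : L ≃ₐ[ℂ] L) (v a : L) :
    (lin e * mulOp a) * mulOp v - mulOp v * (lin e * mulOp a)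
      = lin e * mulOp ((v - e.symm v) * a) := by
  apply LinearMap.ext; intro f
  simp only [LinearMap.sub_apply, Module.End.mul_apply, mulOp, lin,
    LinearMap.mulLeft_apply, AlgEquiv.toLinearMap_apply, map_mul, map_sub,
    AlgEquiv.apply_symm_apply, sub_mul]
  ring

lemma vand_two : vand 2 = x 2 1 - x 2 2 := by
  have h : (Finset.Icc 1 2 ×ˢ Finset.Icc 1 2).filter (fun p : ℕ × ℕ => p.1 < p.2)
      = {((1:ℕ),(2:ℕ))} := by decide
  rw [vand, h, Finset.prod_singleton]

lemma delta21_vand : δ 2 1 (vand 2) = vand 2 - 1 := by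
  rw [vand_two, map_sub, delta_x_eq, delta_x_ne 2 1 2 2 (by decide)]; ring

lemma delta22_vand : δ 2 2 (vand 2) = vand 2 + 1 := by
  rw [vand_two, map_sub, delta_x_eq, delta_x_ne 2 2 2 1 (by decide)]; ring

lemma delta21_symm_vand : (δ 2 1).symm (vand 2) = vand 2 + 1 := by
  rw [AlgEquiv.symm_apply_eq, map_add, delta21_vand, map_one]; ring

lemma delta22_symm_vand : (δ 2 2).symm (vand 2) = vand 2 - 1 := by
  rw [AlgEquiv.symm_apply_eq, map_sub, delta22_vand, map_one]; ring

lemma comm_Ap1 : Vop 2 * Ap 2 1 - Ap 2 1 * Vop 2 = Ap 2 1 := by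
  rw [Vop, Ap, key_comm, delta21_symm_vand]
  norm_num

lemma comm_Ap2 : Ap 2 2 * Vop 2 - Vop 2 * Ap 2 2 = Ap 2 2 := by
  rw [Vop, Ap, key_comm', delta22_symm_vand]
  have hc : (vand 2 - (vand 2 - 1)) * aP 2 2 = aP 2 2 := by ring
  rw [hc]

lemma comm_Am1 : Am 2 1 * Vop 2 - Vop 2 * Am 2 1 = Am 2 1 := by
  rw [Vop, Am, key_comm']
  have h : ((δ 2 1).symm.symm) (vand 2) = vand 2 - 1 := delta21_vand
  rw [h]
  have hc : (vand 2 - (vand 2 - 1)) * aM 2 1 = aM 2 1 := by ring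
  rw [hc]

lemma comm_Am2 : Vop 2 * Am 2 2 - Am 2 2 * Vop 2 = Am 2 2 := by
  rw [Vop, Am, key_comm]
  have h : ((δ 2 2).symm.symm) (vand 2) = vand 2 + 1 := delta22_vand
  rw [h]
  norm_num

lemma Xp_two : Xp 2 = Ap 2 1 + Ap 2 2 := by
  have h : Finset.Icc 1 2 = {1, 2} := by decide
  rw [Xp, h, Finset.sum_pair (by norm_num : (1:ℕ) ≠ 2)]

lemma Xm_two : Xm 2 = Am 2 1 + Am 2 2 := by
  have h : Finset.Icc 1 2 = {1, 2} := by decide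
  rw [Xm, h, Finset.sum_pair (by norm_num : (1:ℕ) ≠ 2)]

/-- for `n = 3`, `[𝒱_2, X_2⁺] = A_{21}⁺ − A_{22}⁺` and
`[𝒱_2, X_2⁻] = −(A_{21}⁻ − A_{22}⁻)`; consequently `A_{21}^±, A_{22}^± ∈ 𝒜(gl_3)`. -/
theorem vand2_commutators_and_membership :
    Vop 2 * Xp 2 - Xp 2 * Vop 2 = Ap 2 1 - Ap 2 2 ∧
    Vop 2 * Xm 2 - Xm 2 * Vop 2 = -(Am 2 1 - Am 2 2) ∧
    Ap 2 1 ∈ Agl 3 ∧ Ap 2 2 ∈ Agl 3 ∧ Am 2 1 ∈ Agl 3 ∧ Am 2 2 ∈ Agl 3 := by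
  have e1 : Vop 2 * Xp 2 - Xp 2 * Vop 2 = Ap 2 1 - Ap 2 2 := by
    rw [Xp_two, mul_add, add_mul]
    calc Vop 2 * Ap 2 1 + Vop 2 * Ap 2 2 - (Ap 2 1 * Vop 2 + Ap 2 2 * Vop 2)
        = (Vop 2 * Ap 2 1 - Ap 2 1 * Vop 2) - (Ap 2 2 * Vop 2 - Vop 2 * Ap 2 2) := by abel
      _ = Ap 2 1 - Ap 2 2 := by rw [comm_Ap1, comm_Ap2]
  have e2 : Vop 2 * Xm 2 - Xm 2 * Vop 2 = -(Am 2 1 - Am 2 2) := by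
    rw [Xm_two, mul_add, add_mul]
    calc Vop 2 * Am 2 1 + Vop 2 * Am 2 2 - (Am 2 1 * Vop 2 + Am 2 2 * Vop 2)
        = (Vop 2 * Am 2 2 - Am 2 2 * Vop 2) - (Am 2 1 * Vop 2 - Vop 2 * Am 2 1) := by abel
      _ = -(Am 2 1 - Am 2 2) := by rw [comm_Am2, comm_Am1]; abel
  have hXp : Xp 2 ∈ Agl 3 := Algebra.subset_adjoin (by left; left; exact ⟨2, by norm_num, by norm_num, Or.inl rfl⟩)
  have hXm : Xm 2 ∈ Agl 3 := Algebra.subset_adjoin (by left; left; exact ⟨2, by norm_num, by norm_num, Or.inr rfl⟩)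
  have hV : Vop 2 ∈ Agl 3 := Algebra.subset_adjoin (by right; exact ⟨2, by norm_num, by norm_num, rfl⟩)
  have he1 : Vop 2 * Xp 2 = (Ap 2 1 - Ap 2 2) + Xp 2 * Vop 2 := by rw [← e1]; abel
  have he2 : Vop 2 * Xm 2 = -(Am 2 1 - Am 2 2) + Xm 2 * Vop 2 := by rw [← e2]; abel
  have hAp1 : Ap 2 1 = (2⁻¹ : ℂ) • Xp 2 +
      ((2⁻¹ : ℂ) • (Vop 2 * Xp 2) + (-(2⁻¹ : ℂ)) • (Xp 2 * Vop 2)) := by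
    rw [he1, Xp_two]; module
  have hAp2 : Ap 2 2 = (2⁻¹ : ℂ) • Xp 2 +
      ((-(2⁻¹ : ℂ)) • (Vop 2 * Xp 2) + ((2⁻¹ : ℂ)) • (Xp 2 * Vop 2)) := by
    rw [he1, Xp_two]; module
  have hAm1 : Am 2 1 = (2⁻¹ : ℂ) • Xm 2 +
      ((-(2⁻¹ : ℂ)) • (Vop 2 * Xm 2) + ((2⁻¹ : ℂ)) • (Xm 2 * Vop 2)) := by
    rw [he2, Xm_two]; module
  have hAm2 : Am 2 2 = (2⁻¹ : ℂ) • Xm 2 +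
      ((2⁻¹ : ℂ) • (Vop 2 * Xm 2) + (-(2⁻¹ : ℂ)) • (Xm 2 * Vop 2)) := by
    rw [he2, Xm_two]; module
  have hVXp := (Agl 3).mul_mem hV hXp
  have hXpV := (Agl 3).mul_mem hXp hV
  have hVXm := (Agl 3).mul_mem hV hXm
  have hXmV := (Agl 3).mul_mem hXm hV
  refine ⟨e1, e2, ?_, ?_, ?_, ?_⟩
  · rw [hAp1]
    exact (Agl 3).add_mem ((Agl 3).smul_mem hXp _)
      ((Agl 3).add_mem ((Agl 3).smul_mem hVXp _) ((Agl 3).smul_mem hXpV _))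
  · rw [hAp2]
    exact (Agl 3).add_mem ((Agl 3).smul_mem hXp _)
      ((Agl 3).add_mem ((Agl 3).smul_mem hVXp _) ((Agl 3).smul_mem hXpV _))
  · rw [hAm1]
    exact (Agl 3).add_mem ((Agl 3).smul_mem hXm _)
      ((Agl 3).add_mem ((Agl 3).smul_mem hVXm _) ((Agl 3).smul_mem hXmV _))
  · rw [hAm2]
    exact (Agl 3).add_mem ((Agl 3).smul_mem hXm _)
      ((Agl 3).add_mem ((Agl 3).smul_mem hVXm _) ((Agl 3).smul_mem hXmV _))
end
end

section
/- For n = 3, let h = (∏_{i=1}^3 (x_{3i}−x_{21}+1)(x_{3i}−x_{22}+1)) · (x_{11}−x_{21})(x_{11}−x_{22}) / ((x_{22}−x_{21}+1)(x_{21}−x_{22}+1)(x_{22}−x_{21})(x_{21}−x_{22})) ∈ L. Then A_{21}⁺ ∘ A_{21}⁻ ∘ A_{22}⁺ ∘ A_{22}⁻ = m_h; the rational function h is fixed by every ℂ-algebra automorphism of L that fixes x_{11}, permutes {x_{21}, x_{22}}, and permutes {x_{31}, x_{32}, x_{33}}; and h ∉ Λ. In particular the 𝕊_3-invariant part of 𝒜(gl_3)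 contains multiplication by a non-polynomial 𝕊_3-invariant rational function. -/
open scoped BigOperators
open MvPolynomial

noncomputable section

/-- The `𝕊_3`-invariant non-polynomial rational function `h`. -/
def hRat : L :=
  ((∏ i ∈ Finset.Icc 1 3, ((x 3 i - x 2 1 + 1) * (x 3 i - x 2 2 + 1))) *
      ((x 1 1 - x 2 1) * (x 1 1 - x 2 2))) /
    ((x 2 2 - x 2 1 + 1) * (x 2 1 - x 2 2 + 1) * (x 2 2 - x 2 1) * (x 2 1 - x 2 2))


set_option maxHeartbeats 1000000
set_option synthInstance.maxHeartbeats 1000000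

lemma delta_x (k i l j : ℕ) :
    δ k i (x l j) = if (l, j) = (k, i) then x l j - 1 else x l j := by
  unfold δ x
  rw [IsFractionRing.algEquivOfAlgEquiv_algebraMap]
  show algebraMap Lam L ((aeval (fun w => if w = (k,i) then X w - 1 else X w)) (X (l,j))) = _
  by_cases h : (l, j) = (k, i) <;> simp [h]

lemma ne_zero_of_eval (p : Lam) (f : ℕ × ℕ → ℂ) (h : eval f p ≠ 0) :
    algebraMap Lam L p ≠ 0 := by
  intro h0
  have : p = 0 := IsFractionRing.to_map_eq_zero_iff.mp h0
  exact h (by simp [this])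

lemma x_sub_ne (k i l j : ℕ) (h : (k,i) ≠ (l,j)) : x k i - x l j ≠ 0 := by
  have : x k i - x l j = algebraMap Lam L (X (k,i) - X (l,j)) := by
    simp [x, map_sub]
  rw [this]
  refine ne_zero_of_eval _ (fun v => if v = (k,i) then 1 else 0) ?_
  simp [h.symm]

lemma x_sub_add_one_ne (k i l j : ℕ) : x k i - x l j + 1 ≠ 0 := by
  have : x k i - x l j + 1 = algebraMap Lam L (X (k,i) - X (l,j) + 1) := by
    simp [x, map_sub, map_add, map_one]
  rw [this]
  by_cases h : (k,i) = (l,j)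
  · refine ne_zero_of_eval _ (fun v => 0) ?_
    simp [h]
  · refine ne_zero_of_eval _ (fun v => 0) ?_
    simp

lemma icc3 : (Finset.Icc 1 3 : Finset ℕ) = {1,2,3} := by decide
lemma icc2e1 : ((Finset.Icc 1 2).erase 1 : Finset ℕ) = {2} := by decide
lemma icc2e2 : ((Finset.Icc 1 2).erase 2 : Finset ℕ) = {1} := by decide

lemma aP21_eq : aP 2 1 =
    -(((x 3 1 - x 2 1) * ((x 3 2 - x 2 1) * (x 3 3 - x 2 1))) / (x 2 2 - x 2 1)) := by
  unfold aP
  rw [icc3, icc2e1]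
  simp [Finset.prod_insert]

lemma aP22_eq : aP 2 2 =
    -(((x 3 1 - x 2 2) * ((x 3 2 - x 2 2) * (x 3 3 - x 2 2))) / (x 2 1 - x 2 2)) := by
  unfold aP
  rw [icc3, icc2e2]
  simp [Finset.prod_insert]

lemma aM21_eq : aM 2 1 = (x 1 1 - x 2 1) / (x 2 2 - x 2 1) := by
  unfold aM
  rw [show (Finset.Icc 1 (2-1) : Finset ℕ) = {1} from rfl, icc2e1]
  simp

lemma aM22_eq : aM 2 2 = (x 1 1 - x 2 2) / (x 2 1 - x 2 2) := by
  unfold aM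
  rw [show (Finset.Icc 1 (2-1) : Finset ℕ) = {1} from rfl, icc2e2]
  simp

lemma dP21_eq : δ 2 1 (aP 2 1) =
    -(((x 3 1 - x 2 1 + 1) * ((x 3 2 - x 2 1 + 1) * (x 3 3 - x 2 1 + 1))) / (x 2 2 - x 2 1 + 1)) := by
  rw [aP21_eq]
  rw [map_neg, map_div₀, map_mul, map_mul, map_sub, map_sub, map_sub, map_sub]
  simp only [delta_x]
  norm_num
  ring

lemma dP22_eq : δ 2 2 (aP 2 2) =
    -(((x 3 1 - x 2 2 + 1) * ((x 3 2 - x 2 2 + 1) * (x 3 3 - x 2 2 + 1))) / (x 2 1 - x 2 2 + 1)) := by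
  rw [aP22_eq]
  rw [map_neg, map_div₀, map_mul, map_mul, map_sub, map_sub, map_sub, map_sub]
  simp only [delta_x]
  norm_num
  ring

lemma hRat_eq : hRat =
    (((x 3 1 - x 2 1 + 1) * (x 3 1 - x 2 2 + 1) * ((x 3 2 - x 2 1 + 1) * (x 3 2 - x 2 2 + 1) *
        ((x 3 3 - x 2 1 + 1) * (x 3 3 - x 2 2 + 1)))) *
      ((x 1 1 - x 2 1) * (x 1 1 - x 2 2))) /
    ((x 2 2 - x 2 1 + 1) * (x 2 1 - x 2 2 + 1) * (x 2 2 - x 2 1) * (x 2 1 - x 2 2)) := by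
  unfold hRat
  rw [icc3]
  simp [Finset.prod_insert, mul_assoc]

lemma genfield {F : Type*} [Field F] (s1 s2 s3 u a b : F)
    (h1 : b - a ≠ 0) (h2 : a - b ≠ 0) (h3 : b - a + 1 ≠ 0) (h4 : a - b + 1 ≠ 0) :
    -(((s1 - a + 1) * ((s2 - a + 1) * (s3 - a + 1))) / (b - a + 1)) *
      ((u - a) / (b - a) *
        (-(((s1 - b + 1) * ((s2 - b + 1) * (s3 - b + 1))) / (a - b + 1)) *
          ((u - b) / (a - b)))) =
    (((s1 - a + 1) * (s1 - b + 1) * ((s2 - a + 1) * (s2 - b + 1) *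
        ((s3 - a + 1) * (s3 - b + 1)))) * ((u - a) * (u - b))) /
    ((b - a + 1) * (a - b + 1) * (b - a) * (a - b)) := by
  field_simp

lemma prod4 : δ 2 1 (aP 2 1) * (aM 2 1 * (δ 2 2 (aP 2 2) * aM 2 2)) = hRat := by
  rw [dP21_eq, dP22_eq, aM21_eq, aM22_eq, hRat_eq]
  exact genfield _ _ _ _ _ _
    (x_sub_ne 2 2 2 1 (by simp)) (x_sub_ne 2 1 2 2 (by simp))
    (x_sub_add_one_ne 2 2 2 1) (x_sub_add_one_ne 2 1 2 2)

lemma part1 : Ap 2 1 * Am 2 1 * Ap 2 2 * Am 2 2 = mulOp hRat := by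
  apply LinearMap.ext
  intro f
  show (Ap 2 1) ((Am 2 1) ((Ap 2 2) ((Am 2 2) f))) = hRat * f
  simp only [Ap, Am, lin, mulOp, Module.End.mul_apply, LinearMap.mulLeft_apply,
    AlgEquiv.toLinearMap_apply, map_mul, AlgEquiv.apply_symm_apply]
  rw [← prod4]
  ring

lemma x_ne (k i l j : ℕ) (h : (k,i) ≠ (l,j)) : x k i ≠ x l j :=
  sub_ne_zero.mp (x_sub_ne k i l j h)

lemma part2 (τ : L ≃ₐ[ℂ] L) (h11 : τ (x 1 1) = x 1 1)
    (h2 : (τ : L → L) '' {x 2 1, x 2 2} = {x 2 1, x 2 2})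
    (h3 : (τ : L → L) '' {x 3 1, x 3 2, x 3 3} = {x 3 1, x 3 2, x 3 3}) :
    τ hRat = hRat := by
  have inj : Function.Injective τ := τ.injective
  have p1 : τ (x 2 1) ∈ ({x 2 1, x 2 2} : Set L) := h2 ▸ Set.mem_image_of_mem _ (by simp)
  have p2 : τ (x 2 2) ∈ ({x 2 1, x 2 2} : Set L) := h2 ▸ Set.mem_image_of_mem _ (by simp)
  have m1 : τ (x 3 1) ∈ ({x 3 1, x 3 2, x 3 3} : Set L) := h3 ▸ Set.mem_image_of_mem _ (by simp)
  have m2 : τ (x 3 2) ∈ ({x 3 1, x 3 2, x 3 3} : Set L) := h3 ▸ Set.mem_image_of_mem _ (by simp)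
  have m3 : τ (x 3 3) ∈ ({x 3 1, x 3 2, x 3 3} : Set L) := h3 ▸ Set.mem_image_of_mem _ (by simp)
  simp only [Set.mem_insert_iff, Set.mem_singleton_iff] at p1 p2 m1 m2 m3
  have n2 : x 2 1 ≠ x 2 2 := x_ne 2 1 2 2 (by simp)
  have n12 : x 3 1 ≠ x 3 2 := x_ne 3 1 3 2 (by simp)
  have n13 : x 3 1 ≠ x 3 3 := x_ne 3 1 3 3 (by simp)
  have n23 : x 3 2 ≠ x 3 3 := x_ne 3 2 3 3 (by simp)
  rw [hRat_eq]
  simp only [map_div₀, map_mul, map_sub, map_add, map_one]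
  rcases p1 with hp1 | hp1 <;> rcases p2 with hp2 | hp2 <;>
    rcases m1 with hm1 | hm1 | hm1 <;> rcases m2 with hm2 | hm2 | hm2 <;>
    rcases m3 with hm3 | hm3 | hm3 <;>
  first
  | exact absurd (inj (hp1.trans hp2.symm)) n2
  | exact absurd (inj (hm1.trans hm2.symm)) n12
  | exact absurd (inj (hm1.trans hm3.symm)) n13
  | exact absurd (inj (hm2.trans hm3.symm)) n23
  | (rw [h11, hp1, hp2, hm1, hm2, hm3]; try ring)

def Npoly : Lam :=
  ((X (3,1) - X (2,1) + 1) * (X (3,1) - X (2,2) + 1) * ((X (3,2) - X (2,1) + 1) *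
      (X (3,2) - X (2,2) + 1) * ((X (3,3) - X (2,1) + 1) * (X (3,3) - X (2,2) + 1)))) *
    ((X (1,1) - X (2,1)) * (X (1,1) - X (2,2)))

def Dpoly : Lam :=
  (X (2,2) - X (2,1) + 1) * (X (2,1) - X (2,2) + 1) * (X (2,2) - X (2,1)) * (X (2,1) - X (2,2))

lemma mapN : algebraMap Lam L Npoly =
    (((x 3 1 - x 2 1 + 1) * (x 3 1 - x 2 2 + 1) * ((x 3 2 - x 2 1 + 1) * (x 3 2 - x 2 2 + 1) *
        ((x 3 3 - x 2 1 + 1) * (x 3 3 - x 2 2 + 1)))) * ((x 1 1 - x 2 1) * (x 1 1 - x 2 2))) := by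
  simp [Npoly, x, map_mul, map_sub, map_add, map_one]

lemma mapD : algebraMap Lam L Dpoly =
    (x 2 2 - x 2 1 + 1) * (x 2 1 - x 2 2 + 1) * (x 2 2 - x 2 1) * (x 2 1 - x 2 2) := by
  simp [Dpoly, x, map_mul, map_sub, map_add, map_one]

lemma part3 : hRat ∉ Set.range (algebraMap Lam L) := by
  rintro ⟨p, hp⟩
  have hd : algebraMap Lam L Dpoly ≠ 0 := by
    refine ne_zero_of_eval _ (fun v => if v = (2,2) then (1/2 : ℂ) else 0) ?_
    simp [Dpoly]
    norm_num
  have hmap : algebraMap Lam L (p * Dpoly) = algebraMap Lam L Npoly := by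
    rw [map_mul, hp, hRat_eq, ← mapN, ← mapD, div_mul_cancel₀ _ hd]
  have heq : p * Dpoly = Npoly := IsFractionRing.injective Lam L hmap
  have hev := congrArg (eval (fun v : ℕ × ℕ => if v.1 = 3 ∨ v = (1,1) then (1 : ℂ) else 0)) heq
  simp [Npoly, Dpoly] at hev

/-- `A_{21}⁺ ∘ A_{21}⁻ ∘ A_{22}⁺ ∘ A_{22}⁻ = m_h`; `h` is fixed by every
ℂ-algebra automorphism of `L` fixing `x_{11}` and permuting `{x_{21}, x_{22}}` and
`{x_{31}, x_{32}, x_{33}}`; and `h` is not a polynomial. -/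
theorem S3_invariant_nonpolynomial_element :
    Ap 2 1 * Am 2 1 * Ap 2 2 * Am 2 2 = mulOp hRat ∧
    (∀ τ : L ≃ₐ[ℂ] L, τ (x 1 1) = x 1 1 →
      (τ : L → L) '' {x 2 1, x 2 2} = {x 2 1, x 2 2} →
      (τ : L → L) '' {x 3 1, x 3 2, x 3 3} = {x 3 1, x 3 2, x 3 3} →
      τ hRat = hRat) ∧
    hRat ∉ Set.range (algebraMap Lam L) :=
  ⟨part1, fun τ h1 h2 h3 => part2 τ h1 h2 h3, part3⟩
end
end

section
/- For every integer k ≥ 1, the multiplication operator m_{1/(x+k)} belongs to U_f. -/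
set_option synthInstance.maxHeartbeats 1000000
set_option maxHeartbeats 1000000


noncomputable section

/-- The polynomial ring `ℂ[x]`. -/
abbrev Pc : Type := Polynomial ℂ

/-- `L = ℂ(x)`, the field of rational functions in one variable. -/
abbrev L1 : Type := FractionRing Pc

/-- The variable `x` as an element of `L`. -/
def x1 : L1 := algebraMap Pc L1 Polynomial.X

/-- The algebra automorphism of `ℂ[x]` with `x ↦ x − 1`. -/
def shift1 : Pc ≃ₐ[ℂ] Pc :=
  AlgEquiv.ofAlgHom
    (Polynomial.aeval (Polynomial.X - 1))
    (Polynomial.aeval (Polynomial.X + 1))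
    (by apply Polynomial.algHom_ext; simp)
    (by apply Polynomial.algHom_ext; simp)

/-- The ℂ-algebra automorphism `δ` of `L = ℂ(x)` with `δ(x) = x − 1`. -/
def δ1 : L1 ≃ₐ[ℂ] L1 := IsFractionRing.algEquivOfAlgEquiv shift1

/-- Multiplication by `a ∈ L` as a ℂ-linear endomorphism `m_a` of `L`. -/
def mul1 (a : L1) : Module.End ℂ L1 := LinearMap.mulLeft ℂ a

/-- The operator `X = δ ∘ m_{f(x)/x}`. -/
def Xop (f : Pc) : Module.End ℂ L1 :=
  δ1.toLinearMap * mul1 (algebraMap Pc L1 f / x1)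

/-- The operator `Y = δ^{-1}`. -/
def Yop : Module.End ℂ L1 := δ1.symm.toLinearMap

/-- `U_f`, the unital ℂ-subalgebra of `End_ℂ(L)` generated by the polynomial
multiplication operators together with `X` and `Y`. -/
def Uf (f : Pc) : Subalgebra ℂ (Module.End ℂ L1) :=
  Algebra.adjoin ℂ
    ({u | ∃ p : Pc, u = mul1 (algebraMap Pc L1 p)} ∪ {Xop f, Yop})

open Polynomial

lemma UF_algInj : Function.Injective (algebraMap Pc L1) := IsFractionRing.injective Pc L1

lemma UF_algMap_ne {p : Pc} (hp : p ≠ 0) : algebraMap Pc L1 p ≠ 0 := by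
  intro h
  exact hp (UF_algInj (by simpa using h))

lemma UF_x1_ne : x1 ≠ 0 := UF_algMap_ne X_ne_zero

lemma UF_C_eq (c : ℂ) : algebraMap Pc L1 (C c) = algebraMap ℂ L1 c := by
  rw [IsScalarTower.algebraMap_apply ℂ Pc L1, Polynomial.algebraMap_eq]

lemma UF_mul1_mul (a b : L1) : mul1 (a * b) = mul1 a * mul1 b := by
  ext v
  simp [mul1, Module.End.mul_apply, mul_assoc]

lemma UF_mul1_one : mul1 (1 : L1) = 1 := by
  ext v; simp [mul1]

lemma UF_mul1_add (a b : L1) : mul1 (a + b) = mul1 a + mul1 b := by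
  ext v; simp [mul1, add_mul]

lemma UF_mul1_sub (a b : L1) : mul1 (a - b) = mul1 a - mul1 b := by
  ext v; simp [mul1, sub_mul]

lemma UF_mul1_pow (a : L1) (n : ℕ) : mul1 (a ^ n) = (mul1 a) ^ n := by
  induction n with
  | zero => simpa using UF_mul1_one
  | succ n ih => rw [pow_succ, pow_succ, UF_mul1_mul, ih]

lemma UF_memP (f p : Pc) : mul1 (algebraMap Pc L1 p) ∈ Uf f :=
  Algebra.subset_adjoin (Or.inl ⟨p, rfl⟩)

lemma UF_memC (f : Pc) (c : ℂ) : mul1 (algebraMap ℂ L1 c) ∈ Uf f := by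
  rw [← UF_C_eq]; exact UF_memP f _

lemma UF_memX (f : Pc) : Xop f ∈ Uf f :=
  Algebra.subset_adjoin (Or.inr (by simp))

lemma UF_memY (f : Pc) : Yop ∈ Uf f :=
  Algebra.subset_adjoin (Or.inr (by simp))

lemma UF_delta_symm_alg (p : Pc) :
    δ1.symm (algebraMap Pc L1 p) = algebraMap Pc L1 (shift1.symm p) := by
  rw [δ1, IsFractionRing.algEquivOfAlgEquiv_symm, IsFractionRing.algEquivOfAlgEquiv_algebraMap]

lemma UF_delta_symm_x1 : δ1.symm x1 = x1 + 1 := by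
  rw [x1, UF_delta_symm_alg]
  have : shift1.symm X = X + 1 := by
    simp [shift1]
  rw [this, map_add, map_one]

lemma UF_conj (f : Pc) (a : L1) :
    Yop * mul1 a * Xop f = mul1 (δ1.symm a * (algebraMap Pc L1 f / x1)) := by
  ext v
  simp only [Yop, Xop, mul1, Module.End.mul_apply, LinearMap.mulLeft_apply,
    AlgEquiv.toLinearMap_apply, map_mul, AlgEquiv.symm_apply_apply]
  ring

-- field identity for the base case
lemma UF_base_elem (c : ℂ) (hc : c ≠ 0) (Q : L1) :
    x1⁻¹ = algebraMap ℂ L1 c⁻¹ * ((x1 * Q + algebraMap ℂ L1 c) / x1 - Q) := by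
  have hcL : algebraMap ℂ L1 c ≠ 0 := by
    simpa using (map_ne_zero (algebraMap ℂ L1)).2 hc
  have hx := UF_x1_ne
  field_simp
  simp [hcL]

-- field identity reducing the conjugated operator symbol
lemma UF_step_elem1 (w H : L1) (hw : w ≠ 0) (hx : x1 ≠ 0) (m : ℕ) :
    (w⁻¹) ^ (m + 1) * (w ^ m * H / x1) = H / (x1 * w) := by
  field_simp
  rw [div_pow, one_pow, pow_succ]; field_simp

-- partial fraction extraction
lemma UF_step_elem2 (cc B : ℂ) (w Q H : L1) (hw : w ≠ 0) (hx : x1 ≠ 0) (hB : B ≠ 0)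
    (hH : H = x1 * w * Q + algebraMap ℂ L1 cc * w + algebraMap ℂ L1 B * x1) :
    w⁻¹ = algebraMap ℂ L1 B⁻¹ *
      (H / (x1 * w) - Q - algebraMap ℂ L1 cc * x1⁻¹) := by
  have hBL : algebraMap ℂ L1 B ≠ 0 := by
    simpa using (map_ne_zero (algebraMap ℂ L1)).2 hB
  subst hH
  field_simp
  rw [show w * (x1 * Q + algebraMap ℂ L1 cc) + x1 * algebraMap ℂ L1 B - w * x1 * Q
      - w * algebraMap ℂ L1 cc = algebraMap ℂ L1 B * x1 by ring,
    ← mul_assoc, ← map_mul, one_div, inv_mul_cancel₀ hB, map_one, one_mul]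

lemma UF_YX (f : Pc) : Yop * Xop f = mul1 (algebraMap Pc L1 f / x1) := by
  have h := UF_conj f 1
  rw [UF_mul1_one, mul_one, map_one, one_mul] at h
  exact h

lemma UF_inv_x_mem (f : Pc) (hf : Polynomial.eval 0 f ≠ 0) : mul1 x1⁻¹ ∈ Uf f := by
  have hdvd : X - C (0:ℂ) ∣ (f - C (f.eval 0)) := dvd_iff_isRoot.2 (by simp [IsRoot])
  obtain ⟨q, hq⟩ := hdvd
  have hF : algebraMap Pc L1 f = x1 * algebraMap Pc L1 q + algebraMap ℂ L1 (f.eval 0) := by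
    have hf' : f = X * q + C (f.eval 0) := by
      rw [map_zero, sub_zero] at hq
      linear_combination hq
    calc algebraMap Pc L1 f = algebraMap Pc L1 (X * q + C (f.eval 0)) := by rw [← hf']
      _ = x1 * algebraMap Pc L1 q + algebraMap ℂ L1 (f.eval 0) := by
          rw [map_add, map_mul, UF_C_eq, x1]
  have key : mul1 x1⁻¹ = mul1 (algebraMap ℂ L1 (f.eval 0)⁻¹) *
      (Yop * Xop f - mul1 (algebraMap Pc L1 q)) := by
    rw [UF_YX, ← UF_mul1_sub, ← UF_mul1_mul]
    congr 1
    rw [hF]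
    exact UF_base_elem _ hf _
  rw [key]
  exact mul_mem (UF_memC f _)
    (sub_mem (mul_mem (UF_memY f) (UF_memX f)) (UF_memP f q))

lemma UF_inv_mem (f : Pc) (hf : Polynomial.eval 0 f ≠ 0) :
    ∀ k : ℕ, mul1 ((x1 + (k : L1))⁻¹) ∈ Uf f := by
  intro k
  induction k with
  | zero => simpa using UF_inv_x_mem f hf
  | succ k ih =>
    have hf0 : f ≠ 0 := fun h0 => hf (by simp [h0])
    set c : ℂ := ((k+1 : ℕ) : ℂ) with hcdef
    have hc0 : c ≠ 0 := Nat.cast_ne_zero.2 (Nat.succ_ne_zero k)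
    obtain ⟨h, hfh, hnd⟩ := f.exists_eq_pow_rootMultiplicity_mul_and_not_dvd hf0 (-c)
    set m := f.rootMultiplicity (-c) with hmdef
    have hhe : h.eval (-c) ≠ 0 := fun he => hnd (dvd_iff_isRoot.2 he)
    set A : ℂ := h.eval 0 / c with hAdef
    set B : ℂ := -(h.eval (-c)) / c with hBdef
    have hB : B ≠ 0 := div_ne_zero (neg_ne_zero.2 hhe) hc0
    have h1 : (X - C (0:ℂ)) ∣ (h - C A * (X + C c) - C B * X) :=
      dvd_iff_isRoot.2 (by simp [IsRoot, hAdef])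
    have h2 : (X - C (-c)) ∣ (h - C A * (X + C c) - C B * X) :=
      dvd_iff_isRoot.2 (by simp [IsRoot, hBdef])
    have hcop : IsCoprime (X - C (0:ℂ)) (X - C (-c)) :=
      isCoprime_X_sub_C_of_isUnit_sub (by simpa using hc0.isUnit)
    obtain ⟨q, hq⟩ := hcop.mul_dvd h1 h2
    have hh : h = X * (X + C c) * q + C A * (X + C c) + C B * X := by
      rw [map_zero, sub_zero, map_neg, sub_neg_eq_add] at hq
      linear_combination hq
    set w : L1 := x1 + algebraMap ℂ L1 c with hwdef
    have hwP : w = algebraMap Pc L1 (X + C c) := by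
      rw [map_add, UF_C_eq, hwdef, x1]
    have hw_eq : w = x1 + ((k+1 : ℕ) : L1) := by
      rw [hwdef, hcdef, map_natCast]
    have hw0 : w ≠ 0 := hwP ▸ UF_algMap_ne (X_add_C_ne_zero c)
    have hH : algebraMap Pc L1 h = x1 * w * (algebraMap Pc L1 q)
        + algebraMap ℂ L1 A * w + algebraMap ℂ L1 B * x1 := by
      rw [hh, hwP]
      simp only [map_add, map_mul, UF_C_eq, x1]
    have hds : δ1.symm ((x1 + (k : L1))⁻¹ ^ (m+1)) = (w⁻¹) ^ (m+1) := by
      rw [map_pow, map_inv₀, map_add, UF_delta_symm_x1, map_natCast, hw_eq]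
      push_cast
      ring_nf
    have hfx : algebraMap Pc L1 f / x1 = w ^ m * algebraMap Pc L1 h / x1 := by
      rw [hfh, map_mul, map_pow, map_neg, sub_neg_eq_add, ← hwP]
    have hT : Yop * (mul1 ((x1 + (k:L1))⁻¹)) ^ (m+1) * Xop f
        = mul1 (algebraMap Pc L1 h / (x1 * w)) := by
      rw [← UF_mul1_pow, UF_conj, hds, hfx,
        UF_step_elem1 w _ hw0 UF_x1_ne m]
    have key : mul1 ((x1 + ((k+1:ℕ) : L1))⁻¹)
        = mul1 (algebraMap ℂ L1 B⁻¹) *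
          ((Yop * (mul1 ((x1 + (k:L1))⁻¹)) ^ (m+1) * Xop f)
            - mul1 (algebraMap Pc L1 q) - mul1 (algebraMap ℂ L1 A) * mul1 x1⁻¹) := by
      rw [hT, ← UF_mul1_mul, ← UF_mul1_sub, ← UF_mul1_sub, ← UF_mul1_mul, ← hw_eq]
      congr 1
      exact UF_step_elem2 A B w _ _ hw0 UF_x1_ne hB hH
    rw [show ((↑(k+1) : L1)) = (((k+1:ℕ) : L1)) by push_cast; ring] at *
    rw [key]
    exact mul_mem (UF_memC f _)
      (sub_mem (sub_mem (mul_mem (mul_mem (UF_memY f) (pow_mem ih _)) (UF_memX f))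
        (UF_memP f q)) (mul_mem (UF_memC f _) (UF_inv_x_mem f hf)))


/-- for every integer `k ≥ 1`, `m_{1/(x+k)} ∈ U_f`. -/
theorem inv_x_add_k_mem_Uf (f : Pc) (hf : Polynomial.eval 0 f ≠ 0)
    (k : ℕ) (hk : 1 ≤ k) :
    mul1 (1 / (x1 + (k : L1))) ∈ Uf f := by
  rw [one_div]
  exact UF_inv_mem f hf k
end
end
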